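/- The shuffle product is well-defined on the suffix abstraction: if suff_l(a₁…aₙ) = suff_l(b₁…bₘ), then for every word w, { suff_l(s) | s ∈ (a₁…aₙ) ⧢ w } = { suff_l(s) | s ∈ (b₁…bₘ) ⧢ w }. -/
import Mathlib

/-- Shuffle with synchronization: complementary heads may synchronize into `τ`. -/
def sh {Act : Type*} [DecidableEq Act] (τ : Act) (bar : Act → Act) :
    List Act → List Act → Set (List Act)
  | [], w' => {w'}
  | w, [] => {w}
  | a :: u, b :: v =>
    (fun s => a :: s) '' sh τ bar u (b :: v) ∪
    (fun s => b :: s) '' sh τ bar (a :: u) v ∪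
    (if b = bar a then (fun s => τ :: s) '' sh τ bar u v else ∅)

/-- `suff l w` is the suffix of `w` of length `min l |w|`. -/
def suff {Act : Type*} (l : ℕ) (w : List Act) : List Act := w.drop (w.length - l)

section aux
variable {Act : Type*} [DecidableEq Act] (τ : Act) (bar : Act → Act)

@[simp] lemma sh_nil_left (w : List Act) : sh τ bar [] w = {w} := by
  cases w <;> rw [sh]

@[simp] lemma sh_cons_nil (a : Act) (u : List Act) : sh τ bar (a :: u) [] = {a :: u} := by
  rw [sh]
  simp

lemma sh_cons_cons (a b : Act) (u v : List Act) :
    sh τ bar (a :: u) (b :: v) =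
    (fun s => a :: s) '' sh τ bar u (b :: v) ∪
    (fun s => b :: s) '' sh τ bar (a :: u) v ∪
    (if b = bar a then (fun s => τ :: s) '' sh τ bar u v else ∅) := by
  rw [sh]

lemma len_sh : ∀ n (x y s : List Act), x.length + y.length ≤ n →
    s ∈ sh τ bar x y → x.length ≤ s.length := by
  intro n
  induction n with
  | zero =>
    intro x y s hn hs
    match x, y with
    | [], y => simp
    | a :: u, y => simp at hn
  | succ n ih =>
    intro x y s hn hs
    match x, y with
    | [], y => simp
    | a :: u, [] => simp_all
    | a :: u, b :: v =>
      rw [sh_cons_cons] at hs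
      rcases hs with (⟨t, ht, rfl⟩ | ⟨t, ht, rfl⟩) | hs
      · have := ih u (b :: v) t (by simp at hn ⊢; omega) ht
        simp at this ⊢; omega
      · have := ih (a :: u) v t (by simp at hn ⊢; omega) ht
        simp at this ⊢; omega
      · split at hs
        · obtain ⟨t, ht, rfl⟩ := hs
          have := ih u v t (by simp at hn ⊢; omega) ht
          simp at this ⊢; omega
        · simp at hs

omit [DecidableEq Act] in
lemma suff_cons (l : ℕ) (a : Act) (s : List Act) (h : l ≤ s.length) :
    suff l (a :: s) = suff l s := by
  simp only [suff, List.length_cons]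
  rw [show s.length + 1 - l = (s.length - l) + 1 by omega, List.drop_succ_cons]

omit [DecidableEq Act] in
lemma suff_append (l : ℕ) (u c : List Act) (h : l ≤ c.length) :
    suff l (u ++ c) = suff l c := by
  induction u with
  | nil => simp
  | cons a u ih =>
    rw [List.cons_append, suff_cons, ih]
    simp; omega

lemma cons_mem_sh (a : Act) (x w t : List Act) (ht : t ∈ sh τ bar x w) :
    a :: t ∈ sh τ bar (a :: x) w := by
  cases w with
  | nil => cases x <;> simp_all
  | cons d v =>
    rw [sh_cons_cons]
    exact Or.inl (Or.inl ⟨t, ht, rfl⟩)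

lemma cons_mem_sh_right (d : Act) (c v t : List Act) (ht : t ∈ sh τ bar c v) :
    d :: t ∈ sh τ bar c (d :: v) := by
  cases c with
  | nil => simp_all
  | cons e c' =>
    rw [sh_cons_cons]
    exact Or.inl (Or.inr ⟨t, ht, rfl⟩)

lemma append_mem_sh (u : List Act) {c w t : List Act} (ht : t ∈ sh τ bar c w) :
    u ++ t ∈ sh τ bar (u ++ c) w := by
  induction u with
  | nil => simpa
  | cons a u ih => exact cons_mem_sh τ bar a _ _ _ ih

lemma shA (l : ℕ) (c : List Act) (hc : l ≤ c.length) :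
    ∀ n (u w : List Act), u.length + w.length ≤ n →
    ∀ s ∈ sh τ bar (u ++ c) w, ∃ t ∈ sh τ bar c w, suff l t = suff l s := by
  intro n
  induction n with
  | zero =>
    intro u w hn s hs
    match u, w with
    | [], w => exact ⟨s, by simpa using hs, rfl⟩
    | _ :: _, w => simp at hn
  | succ n ih =>
    intro u w hn s hs
    match u, w with
    | [], w => exact ⟨s, by simpa using hs, rfl⟩
    | a :: u, [] =>
      refine ⟨c, by cases c <;> simp, ?_⟩
      simp only [List.cons_append, sh_cons_nil, Set.mem_singleton_iff] at hs
      subst hs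
      rw [show a :: (u ++ c) = (a :: u) ++ c from rfl, suff_append _ _ _ hc]
    | a :: u, d :: v =>
      rw [List.cons_append, sh_cons_cons] at hs
      rcases hs with (⟨s', hs', rfl⟩ | ⟨s', hs', rfl⟩) | hs
      · obtain ⟨t, ht, htt⟩ := ih u (d :: v) (by simp at hn ⊢; omega) s' hs'
        have hls' : l ≤ s'.length := by
          have := len_sh τ bar ((u ++ c).length + (d :: v).length) (u ++ c) (d :: v) s' le_rfl hs'
          simp at this; omega
        refine ⟨t, ht, ?_⟩
        show suff l t = suff l (a :: s')
        rw [suff_cons _ _ _ hls', htt]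
      · obtain ⟨t, ht, htt⟩ := ih (a :: u) v (by simp at hn ⊢; omega) s' hs'
        have hls' : l ≤ s'.length := by
          have := len_sh τ bar ((a :: u ++ c).length + v.length) (a :: u ++ c) v s' le_rfl hs'
          simp at this; omega
        have hlt : l ≤ t.length := by
          have := len_sh τ bar (c.length + v.length) c v t le_rfl ht
          omega
        refine ⟨d :: t, cons_mem_sh_right τ bar d c v t ht, ?_⟩
        show suff l (d :: t) = suff l (d :: s')
        rw [suff_cons _ _ _ hlt, suff_cons _ _ _ hls', htt]
      · split at hs
        · obtain ⟨s', hs', rfl⟩ := hs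
          obtain ⟨t, ht, htt⟩ := ih u v (by simp at hn ⊢; omega) s' hs'
          have hls' : l ≤ s'.length := by
            have := len_sh τ bar ((u ++ c).length + v.length) (u ++ c) v s' le_rfl hs'
            simp at this; omega
          have hlt : l ≤ t.length := by
            have := len_sh τ bar (c.length + v.length) c v t le_rfl ht
            omega
          refine ⟨d :: t, cons_mem_sh_right τ bar d c v t ht, ?_⟩
          show suff l (d :: t) = suff l (τ :: s')
          rw [suff_cons _ _ _ hlt, suff_cons _ _ _ hls', htt]
        · simp at hs

lemma sh_suff_eq (l : ℕ) (c : List Act) (hc : l ≤ c.length) (u w : List Act) :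
    (fun s => suff l s) '' sh τ bar (u ++ c) w = (fun s => suff l s) '' sh τ bar c w := by
  apply Set.Subset.antisymm
  · rintro x ⟨s, hs, rfl⟩
    obtain ⟨t, ht, htt⟩ := shA τ bar l c hc (u.length + w.length) u w le_rfl s hs
    exact ⟨t, ht, htt⟩
  · rintro x ⟨t, ht, rfl⟩
    refine ⟨u ++ t, append_mem_sh τ bar u ht, ?_⟩
    have hlt : l ≤ t.length := by
      have := len_sh τ bar (c.length + w.length) c w t le_rfl ht
      omega
    simp [suff_append _ _ _ hlt]

end aux

theorem shuffle_well_defined_suffix {Act : Type*} [DecidableEq Act] (τ : Act)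
    (bar : Act → Act) (hinv : ∀ a, bar (bar a) = a) (l : ℕ) (a b w : List Act)
    (h : suff l a = suff l b) :
    (fun s => suff l s) '' sh τ bar a w = (fun s => suff l s) '' sh τ bar b w := by
  have lsuff : ∀ v : List Act, (suff l v).length = v.length - (v.length - l) := by
    intro v; simp [suff]
  by_cases hla : l ≤ a.length
  · by_cases hlb : l ≤ b.length
    · have hc : l ≤ (suff l a).length := by rw [lsuff]; omega
      have ha : a.take (a.length - l) ++ suff l a = a := List.take_append_drop _ _
      have hb : b.take (b.length - l) ++ suff l b = b := List.take_append_drop _ _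
      calc (fun s => suff l s) '' sh τ bar a w
          = (fun s => suff l s) '' sh τ bar (suff l a) w := by
            conv_lhs => rw [← ha]
            exact sh_suff_eq τ bar l _ hc _ w
        _ = (fun s => suff l s) '' sh τ bar b w := by
            rw [h]
            conv_rhs => rw [← hb]
            exact (sh_suff_eq τ bar l _ (h ▸ hc) _ w).symm
    · exfalso
      have h1 := lsuff a; have h2 := lsuff b; rw [h] at h1; omega
  · have ha : suff l a = a := by simp [suff, show a.length - l = 0 by omega]
    by_cases hlb : l ≤ b.length
    · exfalso
      have h1 := lsuff a; have h2 := lsuff b; rw [h] at h1; omega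
    · have hb : suff l b = b := by simp [suff, show b.length - l = 0 by omega]
      rw [ha, hb] at h; rw [h]
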